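/- arXiv:2206.13253 — 2 statements merged into one kernel-verified Lean document; each statement's English description precedes it below -/
import Mathlib

section
/- (Main Theorem for n-multisets, part (ii).) Let n ≥ 1, let P be an n-multiset of points of ℂ, and let X ∈ Fix(P), i.e. X is a point fixed by every symmetry of P. Then there exists an n-multiset center Z, defined on the family of all n-multisets, such that Z(P) = X. -/
noncomputable section

/-- A similarity of the plane: a bijection multiplying all distances by a fixed
positive ratio. -/
def IsSimilarity (f : ℂ → ℂ) : Prop :=
  Function.Bijective f ∧ ∃ r : ℝ, 0 < r ∧
    ∀ z w : ℂ, ‖f z - f w‖ = r * ‖z - w‖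

/-- An isometry of the plane: a similarity with ratio 1. -/
def IsPlaneIsometry (f : ℂ → ℂ) : Prop :=
  Function.Bijective f ∧ ∀ z w : ℂ, ‖f z - f w‖ = ‖z - w‖

/-- The set of points fixed by every symmetry of the multiset `P`. -/
def FixMultiset (P : Multiset ℂ) : Set ℂ :=
  {x | ∀ T : ℂ → ℂ, IsPlaneIsometry T → Multiset.map T P = P → T x = x}

/-! ### Auxiliary lemmas -/

lemma IsSimilarity.comp' {f g : ℂ → ℂ} (hf : IsSimilarity f) (hg : IsSimilarity g) :
    IsSimilarity (f ∘ g) := by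
  obtain ⟨hfb, r, hr, hrd⟩ := hf
  obtain ⟨hgb, s, hs, hsd⟩ := hg
  exact ⟨hfb.comp hgb, r * s, mul_pos hr hs, fun z w => by
    simp only [Function.comp_apply, hrd, hsd, mul_assoc]⟩

lemma IsSimilarity.id' : IsSimilarity (id : ℂ → ℂ) :=
  ⟨Function.bijective_id, 1, one_pos, fun z w => by simp⟩

/-- The inverse of a similarity (as the symm of `Equiv.ofBijective`) is a similarity. -/
lemma IsSimilarity.symm {f : ℂ → ℂ} (hf : IsSimilarity f) :
    IsSimilarity ⇑(Equiv.ofBijective f hf.1).symm := by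
  obtain ⟨hfb, r, hr, hrd⟩ := hf
  refine ⟨(Equiv.ofBijective f hfb).symm.bijective, r⁻¹, by positivity, fun z w => ?_⟩
  have h := hrd ((Equiv.ofBijective f hfb).symm z) ((Equiv.ofBijective f hfb).symm w)
  rw [show f ((Equiv.ofBijective f hfb).symm z) = z from
        (Equiv.ofBijective f hfb).apply_symm_apply z,
      show f ((Equiv.ofBijective f hfb).symm w) = w from
        (Equiv.ofBijective f hfb).apply_symm_apply w] at h
  field_simp [h]
  rw [h]; ring

/-- The "total pairwise distance" of a multiset. -/
def totDist (Q : Multiset ℂ) : ℝ :=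
  (Q.map fun p => (Q.map fun q => ‖p - q‖).sum).sum

lemma totDist_map {k : ℂ → ℂ} {r : ℝ}
    (hrd : ∀ z w : ℂ, ‖k z - k w‖ = r * ‖z - w‖)
    (Q : Multiset ℂ) : totDist (Q.map k) = r * totDist Q := by
  unfold totDist
  rw [Multiset.map_map]
  have step : ((fun p => ((Q.map k).map fun q => ‖p - q‖).sum) ∘ k)
      = fun p => r * (Q.map fun q => ‖p - q‖).sum := by
    funext p
    simp only [Function.comp_apply, Multiset.map_map]
    rw [show (Multiset.map (fun x => ‖k p - k x‖) Q)
          = Multiset.map (fun q => r * ‖p - q‖) Q from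
        Multiset.map_congr rfl fun q _ => hrd p q]
    exact Multiset.sum_map_mul_left
  rw [step]
  exact Multiset.sum_map_mul_left

/-- A similarity mapping a multiset onto itself, where the multiset has two
distinct points, must have ratio 1 (hence is an isometry). -/
lemma ratio_one_of_mapself {k : ℂ → ℂ} {r : ℝ} (hr : 0 < r)
    (hrd : ∀ z w : ℂ, ‖k z - k w‖ = r * ‖z - w‖)
    {P : Multiset ℂ} (hmap : Multiset.map k P = P)
    {a b : ℂ} (ha : a ∈ P) (hb : b ∈ P) (hab : a ≠ b) : r = 1 := by
  have h1 : totDist P = r * totDist P := by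
    conv_lhs => rw [← hmap]
    exact totDist_map hrd P
  have hpos : 0 < totDist P := by
    have h2 : ‖a - b‖ ≤ (P.map fun q => ‖a - q‖).sum := by
      apply Multiset.single_le_sum
      · intro x hx
        obtain ⟨q, _, rfl⟩ := Multiset.mem_map.1 hx
        exact norm_nonneg _
      · exact Multiset.mem_map_of_mem _ hb
    have h3 : (P.map fun q => ‖a - q‖).sum ≤ totDist P := by
      apply Multiset.single_le_sum
      · intro x hx
        obtain ⟨p, _, rfl⟩ := Multiset.mem_map.1 hx
        exact Multiset.sum_nonneg fun y hy => by
          obtain ⟨q, _, rfl⟩ := Multiset.mem_map.1 hy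
          exact norm_nonneg _
      · exact Multiset.mem_map_of_mem _ ha
    have h4 : 0 < ‖a - b‖ := by
      simpa using sub_ne_zero_of_ne hab
    linarith
  nlinarith

/-- A similarity mapping `P` to itself fixes every point of `FixMultiset P`. -/
lemma fix_of_mapself {P : Multiset ℂ} (hP0 : P ≠ 0) {X : ℂ} (hX : X ∈ FixMultiset P)
    {k : ℂ → ℂ} (hk : IsSimilarity k) (hmap : Multiset.map k P = P) : k X = X := by
  obtain ⟨hkb, r, hr, hrd⟩ := hk
  by_cases hconst : ∃ a ∈ P, ∃ b ∈ P, a ≠ b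
  · obtain ⟨a, ha, b, hb, hab⟩ := hconst
    have hr1 : r = 1 := ratio_one_of_mapself hr hrd hmap ha hb hab
    exact hX k ⟨hkb, fun z w => by rw [hrd, hr1, one_mul]⟩ hmap
  · push_neg at hconst
    obtain ⟨p, hp⟩ := Multiset.exists_mem_of_ne_zero hP0
    have hall : ∀ q ∈ P, q = p := fun q hq => hconst q hq p hp
    -- the reflection about p is a symmetry, so X = p
    have hT : IsPlaneIsometry (fun z => 2 * p - z) := by
      refine ⟨Function.Involutive.bijective (fun z => by ring), fun z w => ?_⟩
      rw [show 2 * p - z - (2 * p - w) = -(z - w) by ring, norm_neg]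
    have hTmap : Multiset.map (fun z => 2 * p - z) P = P := by
      rw [show P = Multiset.map id P by simp]
      rw [Multiset.map_map]
      apply Multiset.map_congr rfl
      intro q hq
      simp [hall q hq]
      ring
    have hXp : X = p := by
      have := hX _ hT hTmap
      linear_combination (-1/2 : ℂ) * this
    have hkp : k p = p := by
      have : k p ∈ Multiset.map k P := Multiset.mem_map_of_mem _ hp
      rw [hmap] at this
      exact hall _ this
    rw [hXp, hkp]

/-- Every similarity of the plane is a real-affine map. -/
lemma sim_affine {f : ℂ → ℂ} (hf : IsSimilarity f) :
    ∃ (g : ℂ →ₗ[ℝ] ℂ) (c : ℂ), ∀ z, f z = g z + c := by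
  obtain ⟨hfb, r, hr, hrd⟩ := hf
  set u : ℂ → ℂ := fun z => r⁻¹ • f z with hu
  have hub : Function.Bijective u := by
    constructor
    · intro a b hab
      exact hfb.1 (smul_right_injective ℂ (inv_ne_zero hr.ne') hab)
    · intro y
      obtain ⟨x, hx⟩ := hfb.2 (r • y)
      refine ⟨x, ?_⟩
      show r⁻¹ • f x = y
      rw [hx, smul_smul, inv_mul_cancel₀ hr.ne', one_smul]
  have huiso : Isometry u := by
    intro z w
    rw [edist_dist, edist_dist]
    congr 1
    rw [Complex.dist_eq, Complex.dist_eq]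
    show ‖r⁻¹ • f z - r⁻¹ • f w‖ = ‖z - w‖
    rw [← smul_sub, norm_smul, hrd,
      Real.norm_eq_abs, abs_of_pos (inv_pos.mpr hr)]
    field_simp
  let e : ℂ ≃ᵢ ℂ := ⟨Equiv.ofBijective u hub, huiso⟩
  let A := e.toRealAffineIsometryEquiv
  have hA : ∀ z, u z = A z := fun z =>
    (congrFun (IsometryEquiv.coeFn_toRealAffineIsometryEquiv e) z).symm
  refine ⟨r • ((A.toAffineIsometry.toAffineMap).linear), r • (A 0), fun z => ?_⟩
  have hdec := AffineMap.decomp (A.toAffineIsometry.toAffineMap : ℂ →ᵃ[ℝ] ℂ)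
  have hAz : A z = (A.toAffineIsometry.toAffineMap).linear z + A 0 := by
    have := congrFun hdec z
    simpa using this
  have : f z = r • u z := by
    rw [hu]
    rw [smul_smul, mul_inv_cancel₀ hr.ne', one_smul]
  rw [this, hA z, hAz, smul_add]
  simp

/-- Centroid of a multiset is equivariant under similarities. -/
lemma centroid_equivariant {f : ℂ → ℂ} (hf : IsSimilarity f) {Q : Multiset ℂ}
    (hQ : Q ≠ 0) :
    (Multiset.map f Q).sum / ((Multiset.map f Q).card : ℂ)
      = f (Q.sum / (Q.card : ℂ)) := by
  obtain ⟨g, c, hg⟩ := sim_affine hf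
  have hcard : ((Q.card : ℂ)) ≠ 0 := by
    simp [Multiset.card_eq_zero, hQ]
  have hsum : (Multiset.map f Q).sum = g Q.sum + (Q.card : ℂ) * c := by
    have : Multiset.map f Q = Multiset.map (fun z => g z + c) Q :=
      Multiset.map_congr rfl fun z _ => hg z
    rw [this, Multiset.sum_map_add]
    congr 1
    · exact (map_multiset_sum g.toAddMonoidHom Q).symm
    · rw [Multiset.map_const', Multiset.sum_replicate]
      push_cast
      ring
  rw [Multiset.card_map, hsum, hg]
  have hgdiv : g (Q.sum / (Q.card : ℂ)) = g Q.sum / (Q.card : ℂ) := by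
    have h1 : Q.sum / (Q.card : ℂ) = ((Q.card : ℝ))⁻¹ • Q.sum := by
      rw [Complex.real_smul]
      push_cast
      ring
    rw [h1, map_smul, Complex.real_smul]
    push_cast
    ring
  rw [hgdiv]
  field_simp

/-- Well-definedness: two similarities sending `P` to the same multiset agree at `X`. -/
lemma welldef {P : Multiset ℂ} (hP0 : P ≠ 0) {X : ℂ} (hX : X ∈ FixMultiset P)
    {f g : ℂ → ℂ} (hf : IsSimilarity f) (hg : IsSimilarity g)
    (h : Multiset.map f P = Multiset.map g P) : f X = g X := by
  set e := Equiv.ofBijective g hg.1 with he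
  have hk : IsSimilarity (⇑e.symm ∘ f) := hg.symm.comp' hf
  have hkmap : Multiset.map (⇑e.symm ∘ f) P = P := by
    rw [← Multiset.map_map, h, Multiset.map_map]
    have : (⇑e.symm ∘ g) = id := by
      funext z
      exact Equiv.ofBijective_symm_apply_apply g hg.1 z
    rw [this, Multiset.map_id]
  have := fix_of_mapself hP0 hX hk hkmap
  have h2 : e.symm (f X) = X := this
  calc f X = e (e.symm (f X)) := (e.apply_symm_apply _).symm
    _ = g X := by rw [h2]; rfl

/-- Main theorem for `n`-multisets, part (ii): every point `X` fixed by the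
group of symmetries of `P` is the value at `P` of some `n`-multiset center `Z`
defined on all `n`-multisets. -/
theorem stmt10 (n : ℕ) (hn : 1 ≤ n) (P : Multiset ℂ) (hP : Multiset.card P = n)
    (X : ℂ) (hX : X ∈ FixMultiset P) :
    ∃ Z : Multiset ℂ → ℂ,
      (∀ Q : Multiset ℂ, Multiset.card Q = n →
        ∀ f : ℂ → ℂ, IsSimilarity f → Z (Multiset.map f Q) = f (Z Q)) ∧
      Z P = X := by
  classical
  have hP0 : P ≠ 0 := by
    intro h
    rw [h] at hP
    simp at hP
    omega
  refine ⟨fun Q => if h : ∃ f : ℂ → ℂ, IsSimilarity f ∧ Multiset.map f P = Q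
      then h.choose X else Q.sum / (Q.card : ℂ), ?_, ?_⟩
  · intro Q hQ f hf
    by_cases h1 : ∃ g : ℂ → ℂ, IsSimilarity g ∧ Multiset.map g P = Q
    · have h2 : ∃ g : ℂ → ℂ, IsSimilarity g ∧ Multiset.map g P = Multiset.map f Q :=
        ⟨f ∘ h1.choose, hf.comp' h1.choose_spec.1, by
          conv_rhs => rw [← h1.choose_spec.2]
          rw [Multiset.map_map]⟩
      simp only []
      rw [dif_pos h1, dif_pos h2]
      have hmaps : Multiset.map h2.choose P = Multiset.map (f ∘ h1.choose) P := by
        rw [h2.choose_spec.2]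
        conv_lhs => rw [← h1.choose_spec.2]
        rw [Multiset.map_map]
      exact welldef hP0 hX h2.choose_spec.1 (hf.comp' h1.choose_spec.1) hmaps
    · have h2 : ¬ ∃ g : ℂ → ℂ, IsSimilarity g ∧ Multiset.map g P = Multiset.map f Q := by
        rintro ⟨g, hg, hgm⟩
        apply h1
        set e := Equiv.ofBijective f hf.1 with he
        refine ⟨⇑e.symm ∘ g, hf.symm.comp' hg, ?_⟩
        rw [← Multiset.map_map, hgm, Multiset.map_map]
        have : (⇑e.symm ∘ f) = id := by
          funext z
          exact Equiv.ofBijective_symm_apply_apply f hf.1 z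
        rw [this, Multiset.map_id]
      simp only []
      rw [dif_neg h1, dif_neg h2]
      exact centroid_equivariant hf (by
        intro h
        rw [h] at hQ
        simp at hQ
        omega)
  · have h1 : ∃ f : ℂ → ℂ, IsSimilarity f ∧ Multiset.map f P = P :=
      ⟨id, IsSimilarity.id', by simp⟩
    simp only []
    rw [dif_pos h1]
    exact fix_of_mapself hP0 hX h1.choose_spec.1 h1.choose_spec.2
end
end

section
/- (Main Theorem for n-gons, part (i).) Let n ≥ 3, let F ⊆ (Fin n → ℂ) be a family of labellings closed under similarities and relabellings, let Z be an n-gon center on F, let v ∈ F, and let T be a symmetry of the n-gon v. Then T(Z(v)) = Z(v); in particular, Z(v) belongs to Fix(v), the set of points fixed by the group of symmetries of the n-gon v. -/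
noncomputable section

/-- `α` is an element of the dihedral subgroup of the permutations of `Fin n`:
`i ↦ i + k` or `i ↦ k - i` (mod `n`). -/
def IsDihedral (n : ℕ) (α : Fin n → Fin n) : Prop :=
  (∃ k : Fin n, ∀ i, α i = i + k) ∨ (∃ k : Fin n, ∀ i, α i = k - i)

/-- `T` is a symmetry of the `n`-gon labelled by `v`: a plane isometry with
`T ∘ v = v ∘ α` for some dihedral relabelling `α`. -/
def IsPolygonSymmetry (n : ℕ) (v : Fin n → ℂ) (T : ℂ → ℂ) : Prop :=
  IsPlaneIsometry T ∧ ∃ α : Fin n → Fin n, IsDihedral n α ∧ T ∘ v = v ∘ α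

/-- The set of points fixed by every symmetry of the `n`-gon labelled by `v`. -/
def FixPolygon (n : ℕ) (v : Fin n → ℂ) : Set ℂ :=
  {x | ∀ T : ℂ → ℂ, IsPolygonSymmetry n v T → T x = x}

/-- Main theorem for `n`-gons, part (i): any `n`-gon center `Z` on a family `F`
of labellings closed under similarities and relabellings satisfies
`T (Z v) = Z v` for every symmetry `T` of the `n`-gon `v ∈ F`; in particular
`Z v ∈ Fix v`. -/
theorem stmt14 (n : ℕ) (hn : 3 ≤ n) (F : Set (Fin n → ℂ))
    (hFclosed : ∀ v ∈ F, ∀ f : ℂ → ℂ, IsSimilarity f →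
      ∀ α : Fin n → Fin n, IsDihedral n α → (f ∘ v ∘ α) ∈ F)
    (Z : (Fin n → ℂ) → ℂ)
    (hZdih : ∀ v ∈ F, ∀ α : Fin n → Fin n, IsDihedral n α → v ∘ α ∈ F →
      Z (v ∘ α) = Z v)
    (hZsim : ∀ v ∈ F, ∀ f : ℂ → ℂ, IsSimilarity f → Z (f ∘ v) = f (Z v))
    (v : Fin n → ℂ) (hv : v ∈ F)
    (T : ℂ → ℂ) (hT : IsPolygonSymmetry n v T) :
    T (Z v) = Z v ∧ Z v ∈ FixPolygon n v := by
  have key : ∀ T' : ℂ → ℂ, IsPolygonSymmetry n v T' → T' (Z v) = Z v := by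
    intro T' hT'
    obtain ⟨⟨hbij, hiso⟩, α, hα, hTv⟩ := hT'
    have hsim : IsSimilarity T' := ⟨hbij, 1, one_pos, by simpa using hiso⟩
    have hid : IsSimilarity (id : ℂ → ℂ) :=
      ⟨Function.bijective_id, 1, one_pos, by simp⟩
    have hmem : v ∘ α ∈ F := by
      have := hFclosed v hv id hid α hα
      simpa using this
    calc T' (Z v) = Z (T' ∘ v) := (hZsim v hv T' hsim).symm
      _ = Z (v ∘ α) := by rw [hTv]
      _ = Z v := hZdih v hv α hα hmem
  exact ⟨key T hT, key⟩
end
end
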